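/- arXiv:2201.10631 — 3 statements merged into one kernel-verified Lean document; each statement's English description precedes it below -/
import Mathlib

section
/- Let n ≥ 2 be even and let k = 1. For every similarity matrix S ∈ [0,1]^{n×n}, there exist a partition of [n] into two subsets A₁, A₂ each of size n/2 and an assignment M with loads 1 respecting (A₁, A₂) such that the similarity of M is at least (2/3)·Opt_S, where Opt_S is the maximum similarity over all assignments with loads 1. -/
set_option linter.unusedSectionVars false
set_option linter.unusedVariables false
set_option linter.unnecessarySeqFocus false
set_option maxHeartbeats 1000000

namespace Stmt1Aux
open Function

section ListLemmas
variable {α : Type*}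

/-- Split a list into elements at even and odd positions. -/
def altSplit : List α → List α × List α
  | [] => ([], [])
  | a :: l => (a :: (altSplit l).2, (altSplit l).1)

@[simp] lemma altSplit_nil : altSplit ([] : List α) = ([], []) := rfl
@[simp] lemma altSplit_cons (a : α) (l : List α) :
    altSplit (a :: l) = (a :: (altSplit l).2, (altSplit l).1) := rfl

lemma altSplit_perm : ∀ l : List α, ((altSplit l).1 ++ (altSplit l).2).Perm l
  | [] => by simp
  | a :: l => by
    simpa using ((List.perm_append_comm.trans (altSplit_perm l)).cons a)

lemma altSplit_length : ∀ l : List α,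
    (altSplit l).1.length = (l.length + 1) / 2 ∧ (altSplit l).2.length = l.length / 2
  | [] => by simp
  | a :: l => by
    obtain ⟨h1, h2⟩ := altSplit_length l
    refine ⟨?_, ?_⟩ <;> simp only [altSplit_cons, List.length_cons, h1, h2] <;> omega

lemma head_mem_altSplit (l : List α) (h : l ≠ []) : l.head h ∈ (altSplit l).1 := by
  cases l with
  | nil => exact absurd rfl h
  | cons a t => simp

lemma getLast_mem_altSplit : ∀ (l : List α) (h : l ≠ []),
    (Even l.length → l.getLast h ∈ (altSplit l).2) ∧
    (¬ Even l.length → l.getLast h ∈ (altSplit l).1)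
  | [], h => absurd rfl h
  | [a], _ => by simp
  | a :: b :: t, _ => by
    have hbt : (b :: t : List α) ≠ [] := by simp
    obtain ⟨h1, h2⟩ := getLast_mem_altSplit (b :: t) hbt
    rw [List.getLast_cons hbt]
    have hpar : Even (a :: b :: t).length ↔ ¬ Even (b :: t).length := by
      simp [List.length_cons, Nat.even_add_one]
    constructor
    · intro he
      simpa using h2 (hpar.mp he)
    · intro he
      have : Even (b :: t).length := by
        by_contra hc
        exact he (hpar.mpr hc)
      exact List.mem_cons_of_mem a (h1 this)


lemma pathPairs_cross : ∀ (l : List α), ∀ p ∈ l.dropLast.zip l.tail,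
    (p.1 ∈ (altSplit l).1 ∧ p.2 ∈ (altSplit l).2) ∨
    (p.1 ∈ (altSplit l).2 ∧ p.2 ∈ (altSplit l).1)
  | [] => by simp
  | [a] => by simp
  | a :: b :: t => by
    intro p hp
    have hd : (a :: b :: t).dropLast = a :: (b :: t).dropLast := rfl
    have ht : (a :: b :: t).tail = b :: t := rfl
    rw [hd, ht] at hp
    have hzip : (a :: (b :: t).dropLast).zip (b :: t) =
        (a, b) :: (b :: t).dropLast.zip t := rfl
    rw [hzip] at hp
    rcases List.mem_cons.mp hp with h | h
    · subst h
      refine Or.inl ⟨by simp, ?_⟩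
      simp only [altSplit_cons]
      exact List.mem_cons_self
    · have := pathPairs_cross (b :: t) p (by simpa using h)
      rcases this with ⟨h1, h2⟩ | ⟨h1, h2⟩
      · exact Or.inr ⟨h1, List.mem_cons_of_mem a h2⟩
      · exact Or.inl ⟨List.mem_cons_of_mem a h1, h2⟩

lemma pathPairs_ne : ∀ (l : List α), l.Nodup → ∀ p ∈ l.dropLast.zip l.tail, p.1 ≠ p.2
  | [] => by simp
  | [a] => by simp
  | a :: b :: t => by
    intro hnd p hp
    have hzip : ((a :: b :: t).dropLast).zip (a :: b :: t).tail =
        (a, b) :: (b :: t).dropLast.zip t := rfl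
    rw [hzip] at hp
    rcases List.mem_cons.mp hp with h | h
    · subst h
      intro hc
      have : a = b := hc
      exact (List.nodup_cons.mp hnd).1 (this ▸ List.mem_cons_self)
    · exact pathPairs_ne (b :: t) (List.nodup_cons.mp hnd).2 p (by simpa using h)

lemma zip_rotate_eq (l : List α) (h : l ≠ []) :
    l.zip (l.rotate 1) = l.dropLast.zip l.tail ++ [(l.getLast h, l.head h)] := by
  cases l with
  | nil => exact absurd rfl h
  | cons x t =>
    have hrot : (x :: t).rotate 1 = t ++ [x] := by
      simpa using List.rotate_cons_succ t x 0
    conv_lhs => rw [hrot, ← List.dropLast_append_getLast h]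
    rw [List.zip_append (by simp [List.length_dropLast])]
    simp


end ListLemmas

section Weights
variable {α : Type*} (S : α → α → ℝ) (f : α → α)

def cw (c : List α) : ℝ := ((c.zip (c.rotate 1)).map fun p => S p.1 p.2).sum
def pw (c : List α) : ℝ := ((c.dropLast.zip c.tail).map fun p => S p.1 p.2).sum
def sw (c : List α) : ℝ := (c.map fun y => S y (f y)).sum

lemma cw_eq_pw (c : List α) (h : c ≠ []) :
    cw S c = pw S c + S (c.getLast h) (c.head h) := by
  rw [cw, zip_rotate_eq c h, List.map_append, List.sum_append, pw]
  simp

lemma pw_append (a b : List α) (ha : a ≠ []) (hb : b ≠ []) :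
    pw S (a ++ b) = pw S a + S (a.getLast ha) (b.head hb) + pw S b := by
  have h1 : (a ++ b).dropLast = (a.dropLast ++ ([a.getLast ha] ++ b.dropLast)) := by
    rw [List.dropLast_append_of_ne_nil (l' := a) hb, ← List.append_assoc,
      List.dropLast_append_getLast ha]
  have h2 : (a ++ b).tail = a.tail ++ ([b.head hb] ++ b.tail) := by
    rw [List.tail_append_of_ne_nil ha]
    congr 1
    simp [List.cons_head_tail hb]
  rw [pw, h1, h2, List.zip_append (by cases a with | nil => exact absurd rfl ha | cons x t => simp),
    List.zip_append (by simp)]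
  simp [pw]
  ring

lemma cw_of_cycle (c : List α) (h : c.rotate 1 = c.map f) : cw S c = sw S f c := by
  rw [cw, h]
  conv_lhs => rw [show c.zip (c.map f) = (c.map id).zip (c.map f) by rw [List.map_id],
    List.zip_map' (f := id) (g := f) (l := c)]
  rw [List.map_map, sw]
  rfl

lemma head_eq_f_getLast (c : List α) (hne : c ≠ []) (h : c.rotate 1 = c.map f) :
    c.head hne = f (c.getLast hne) := by
  have h1 : (c.rotate 1).getLast? = (c.map f).getLast? := by rw [h]
  have h2 : (c.map f).getLast? = some (f (c.getLast hne)) := by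
    rw [List.getLast?_eq_getLast (l := c.map f) (by simp [hne]), List.getLast_map]
  cases c with
  | nil => exact absurd rfl hne
  | cons x t =>
    have hrot : (x :: t).rotate 1 = t ++ [x] := by simpa using List.rotate_cons_succ t x 0
    rw [hrot, List.getLast?_concat, h2] at h1
    simpa using h1

lemma pw_eq_sw_sub (c : List α) (hne : c ≠ []) (h : c.rotate 1 = c.map f) :
    pw S c = sw S f c - S (c.getLast hne) (f (c.getLast hne)) := by
  have := cw_eq_pw S c hne
  rw [cw_of_cycle S f c h, head_eq_f_getLast f c hne h] at this
  linarith

lemma sw_nonneg (c : List α) (hS : ∀ x y, 0 ≤ S x y) : 0 ≤ sw S f c :=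
  List.sum_nonneg (by simp only [List.mem_map]; rintro x ⟨y, _, rfl⟩; exact hS _ _)

lemma list_mul_le_sum (m : ℝ) : ∀ l : List ℝ, (∀ x ∈ l, m ≤ x) → (l.length : ℝ) * m ≤ l.sum
  | [], _ => by simp
  | x :: t, h => by
    have := list_mul_le_sum m t (fun y hy => h y (List.mem_cons_of_mem x hy))
    have hx := h x (List.mem_cons_self (a := x) (l := t))
    simp only [List.length_cons, List.sum_cons]
    push_cast
    nlinarith

lemma min_le_third (c : List α) (hne : c ≠ []) (h3 : 3 ≤ c.length)
    (hS : ∀ x y, 0 ≤ S x y)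
    (hmin : ∀ y ∈ c, S (c.getLast hne) (f (c.getLast hne)) ≤ S y (f y)) :
    S (c.getLast hne) (f (c.getLast hne)) ≤ sw S f c / 3 := by
  set m := S (c.getLast hne) (f (c.getLast hne)) with hm
  have hcard : (c.length : ℝ) * m ≤ sw S f c := by
    rw [sw]
    have hlen : ((c.map fun y => S y (f y)).length : ℝ) = (c.length : ℝ) := by simp
    rw [← hlen]
    apply list_mul_le_sum
    simp only [List.mem_map]
    rintro x ⟨y, hy, rfl⟩
    exact hmin y hy
  have hm0 : 0 ≤ m := hS _ _
  have h3m : (3 : ℝ) * m ≤ (c.length : ℝ) * m := by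
    apply mul_le_mul_of_nonneg_right _ hm0
    exact_mod_cast h3
  linarith


lemma rotate_cycle (c : List α) (h : c.rotate 1 = c.map f) (k : ℕ) :
    (c.rotate k).rotate 1 = (c.rotate k).map f := by
  rw [List.rotate_rotate, List.map_rotate, ← h, List.rotate_rotate, Nat.add_comm]

lemma exists_min_rotation [DecidableEq α] (c : List α) (hne : c ≠ [])
    (h : c.rotate 1 = c.map f) :
    ∃ (c' : List α) (hne' : c' ≠ []), c'.Perm c ∧ c'.rotate 1 = c'.map f ∧
      ∀ y ∈ c', S (c'.getLast hne') (f (c'.getLast hne')) ≤ S y (f y) := by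
  obtain ⟨y, hy, hymin⟩ := Finset.exists_min_image c.toFinset (fun y => S y (f y))
    (by simpa [List.toFinset_eq_empty_iff] using hne)
  rw [List.mem_toFinset] at hy
  obtain ⟨l₁, l₂, rfl⟩ := List.append_of_mem hy
  refine ⟨(l₁ ++ y :: l₂).rotate (l₁.length + 1), ?_, List.rotate_perm _ _, rotate_cycle f _ h _, ?_⟩
  · simp only [ne_eq, ← List.length_eq_zero_iff]
    simp
  · have hrw : (l₁ ++ y :: l₂).rotate (l₁.length + 1) = (l₂ ++ l₁) ++ [y] := by
      rw [← List.rotate_rotate, List.rotate_append_length_eq]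
      show (y :: (l₂ ++ l₁)).rotate 1 = _
      simpa using List.rotate_cons_succ (l₂ ++ l₁) y 0
    intro z hz
    have hgl : ∀ (hh : (l₁ ++ y :: l₂).rotate (l₁.length + 1) ≠ []),
        ((l₁ ++ y :: l₂).rotate (l₁.length + 1)).getLast hh = y := by
      intro hh
      have h1 := List.getLast?_eq_getLast hh
      conv at h1 => lhs; rw [hrw]
      rw [List.getLast?_concat] at h1
      exact (Option.some_injective _ h1.symm)
    rw [hgl]
    apply hymin
    rw [List.mem_toFinset]
    exact ((List.rotate_perm _ _).mem_iff).mp hz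


lemma sw_perm {a b : List α} (h : a.Perm b) : sw S f a = sw S f b :=
  (h.map _).sum_eq

/-- key bound for a single rotated odd cycle -/
lemma pw_ge (hS : ∀ x y, 0 ≤ S x y) (c : List α) (hne : c ≠ []) (h3 : 3 ≤ c.length)
    (hcyc : c.rotate 1 = c.map f)
    (hmin : ∀ y ∈ c, S (c.getLast hne) (f (c.getLast hne)) ≤ S y (f y)) :
    (2/3 : ℝ) * sw S f c ≤ pw S c := by
  rw [pw_eq_sw_sub S f c hne hcyc]
  have := min_le_third S f c hne h3 hS hmin
  linarith

lemma pairUp [DecidableEq α] (hS : ∀ x y, 0 ≤ S x y) :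
    ∀ (N : ℕ) (os : List (List α)), os.length = N → Even N →
    (∀ c ∈ os, c.rotate 1 = c.map f ∧ 3 ≤ c.length ∧ Odd c.length) →
    ∃ cs : List (List α),
      (∀ c ∈ cs, 2 ≤ c.length ∧ Even c.length) ∧
      cs.flatten.Perm os.flatten ∧
      (2/3 : ℝ) * ((os.map (sw S f)).sum) ≤ (cs.map (cw S)).sum := by
  intro N
  induction N using Nat.strong_induction_on with
  | _ N ih =>
    intro os hlen hev hprop
    match os, hlen with
    | [], rfl => exact ⟨[], by simp, by simp, by simp⟩
    | [a], rfl => simp at hev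
    | a :: b :: r, rfl =>
      obtain ⟨ha_cyc, ha3, haodd⟩ := hprop a (by simp)
      obtain ⟨hb_cyc, hb3, hbodd⟩ := hprop b (by simp)
      have hane : a ≠ [] := by intro h; subst h; simp at ha3
      have hbne : b ≠ [] := by intro h; subst h; simp at hb3
      obtain ⟨a', hane', hpa, hcyca, hmina⟩ := exists_min_rotation S f a hane ha_cyc
      obtain ⟨b', hbne', hpb, hcycb, hminb⟩ := exists_min_rotation S f b hbne hb_cyc
      have hr : Even r.length := by
        simp only [List.length_cons] at hev
        rcases hev with ⟨k, hk⟩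
        exact ⟨k - 1, by omega⟩
      obtain ⟨cs, hcs1, hcs2, hcs3⟩ := ih r.length (by simp only [List.length_cons]; omega) r rfl hr
        (fun c hc => hprop c (by simp [hc]))
      refine ⟨(a' ++ b') :: cs, ?_, ?_, ?_⟩
      · intro c hc
        rcases List.mem_cons.mp hc with rfl | hc
        · constructor
          · rw [List.length_append, hpa.length_eq, hpb.length_eq]; omega
          · rw [List.length_append, hpa.length_eq, hpb.length_eq]
            exact haodd.add_odd hbodd
        · exact hcs1 c hc
      · have e1 : ((a' ++ b') :: cs).flatten = a' ++ (b' ++ cs.flatten) := by simp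
        have e2 : (a :: b :: r).flatten = a ++ (b ++ r.flatten) := by simp
        rw [e1, e2]
        exact hpa.append (hpb.append hcs2)
      · have h1 : cw S (a' ++ b') = pw S (a' ++ b') +
            S ((a' ++ b').getLast (by simp [hane'])) ((a' ++ b').head (by simp [hane'])) :=
          cw_eq_pw S (a' ++ b') (by simp [hane'])
        have h2 := pw_append S a' b' hane' hbne'
        have h3a : 3 ≤ a'.length := by rw [hpa.length_eq]; exact ha3
        have h3b : 3 ≤ b'.length := by rw [hpb.length_eq]; exact hb3
        have hga := pw_ge S f hS a' hane' h3a hcyca hmina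
        have hgb := pw_ge S f hS b' hbne' h3b hcycb hminb
        have hswa : sw S f a' = sw S f a := sw_perm S f hpa
        have hswb : sw S f b' = sw S f b := sw_perm S f hpb
        have hnn1 : 0 ≤ S ((a' ++ b').getLast (by simp [hane'])) ((a' ++ b').head (by simp [hane'])) := hS _ _
        have hnn2 : 0 ≤ S (a'.getLast hane') (b'.head hbne') := hS _ _
        simp only [List.map_cons, List.sum_cons]
        rw [hswa] at hga
        rw [hswb] at hgb
        linarith [h1, h2, hga, hgb, hnn1, hnn2, hcs3]
  

end Weights

section Orbits
variable {α : Type*} {f : α → α}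

noncomputable def orbitList (f : α → α) (x : α) : List α :=
  (List.range (minimalPeriod f x)).map (fun t => f^[t] x)

lemma mem_orbitList {x y : α} (hper : x ∈ periodicPts f) :
    y ∈ orbitList f x ↔ ∃ t, t < minimalPeriod f x ∧ y = f^[t] x := by
  simp [orbitList, List.mem_range]

lemma orbitList_ne_nil {x : α} (hper : x ∈ periodicPts f) : orbitList f x ≠ [] := by
  have := minimalPeriod_pos_of_mem_periodicPts hper
  simp [orbitList, List.range_eq_nil]
  omega

lemma self_mem_orbitList {x : α} (hper : x ∈ periodicPts f) : x ∈ orbitList f x :=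
  (mem_orbitList hper).mpr ⟨0, minimalPeriod_pos_of_mem_periodicPts hper, rfl⟩

lemma orbitList_nodup {x : α} : (orbitList f x).Nodup := by
  apply List.Nodup.map_on _ List.nodup_range
  intro a ha b hb hab
  exact iterate_injOn_Iio_minimalPeriod (by simpa using ha) (by simpa using hb) hab

lemma orbitList_rotate {x : α} (hper : x ∈ periodicPts f) :
    (orbitList f x).rotate 1 = (orbitList f x).map f := by
  have hp := minimalPeriod_pos_of_mem_periodicPts hper
  apply List.ext_get
  · simp [orbitList]
  · intro n h1 h2
    rw [List.get_rotate]
    simp only [List.get_eq_getElem, orbitList, List.getElem_map, List.getElem_range,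
      List.length_map, List.length_range]
    rw [Function.iterate_mod_minimalPeriod_eq, Function.iterate_succ_apply']

lemma mem_orbitList_of_apply_mem (hinj : Injective f) {x y : α} (hper : x ∈ periodicPts f)
    (h : f y ∈ orbitList f x) : y ∈ orbitList f x := by
  have hp := minimalPeriod_pos_of_mem_periodicPts hper
  obtain ⟨t, ht, hty⟩ := (mem_orbitList hper).mp h
  cases t with
  | zero =>
    have h5 : f^[minimalPeriod f x - 1 + 1] x = f (f^[minimalPeriod f x - 1] x) :=
      Function.iterate_succ_apply' f _ x
    have h6 : minimalPeriod f x - 1 + 1 = minimalPeriod f x := by omega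
    rw [h6, Function.iterate_minimalPeriod] at h5
    have h7 : f y = f (f^[minimalPeriod f x - 1] x) := by
      rw [← h5]; exact hty
    exact (mem_orbitList hper).mpr ⟨_, by omega, hinj h7⟩
  | succ t =>
    have h5 : f^[t + 1] x = f (f^[t] x) := Function.iterate_succ_apply' f _ x
    have h7 : f y = f (f^[t] x) := by rw [← h5]; exact hty
    exact (mem_orbitList hper).mpr ⟨t, by omega, hinj h7⟩

lemma apply_mem_orbitList {x y : α} (hper : x ∈ periodicPts f)
    (h : y ∈ orbitList f x) : f y ∈ orbitList f x := by
  have : f y ∈ (orbitList f x).map f := List.mem_map_of_mem (f := f) h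
  rw [← orbitList_rotate hper] at this
  exact (List.rotate_perm _ _).subset this

lemma cover [DecidableEq α] (hinj : Injective f) (hper : ∀ x, x ∈ periodicPts f) :
    ∀ s : Finset α, (∀ y ∈ s, f y ∈ s) →
    ∃ L : List (List α), (∀ c ∈ L, c ≠ [] ∧ c.rotate 1 = c.map f) ∧
      L.flatten.Nodup ∧ L.flatten.toFinset = s := by
  intro s
  induction s using Finset.strongInduction with
  | _ s ih =>
    intro hclosed
    rcases s.eq_empty_or_nonempty with rfl | ⟨x, hx⟩
    · exact ⟨[], by simp, by simp, by simp⟩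
    · have hit : ∀ t, f^[t] x ∈ s := by
        intro t
        induction t with
        | zero => exact hx
        | succ t iht =>
          have h5 : f^[t + 1] x = f (f^[t] x) := Function.iterate_succ_apply' f _ x
          rw [h5]
          exact hclosed _ iht
      have horbsub : ∀ y ∈ orbitList f x, y ∈ s := by
        intro y hy
        obtain ⟨t, _, rfl⟩ := (mem_orbitList (hper x)).mp hy
        exact hit t
      set s' := s \ (orbitList f x).toFinset with hs'
      have hss : s' ⊂ s := by
        apply Finset.sdiff_ssubset ?_ ?_
        · intro y hy
          rw [List.mem_toFinset] at hy
          exact horbsub y hy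
        · exact ⟨x, List.mem_toFinset.mpr (self_mem_orbitList (hper x))⟩
      have hclosed' : ∀ y ∈ s', f y ∈ s' := by
        intro y hy
        rw [hs', Finset.mem_sdiff] at hy ⊢
        refine ⟨hclosed y hy.1, fun hc => hy.2 ?_⟩
        rw [List.mem_toFinset] at hc ⊢
        exact mem_orbitList_of_apply_mem hinj (hper x) hc
      obtain ⟨L, hL1, hL2, hL3⟩ := ih s' hss hclosed'
      refine ⟨orbitList f x :: L, ?_, ?_, ?_⟩
      · intro c hc
        rcases List.mem_cons.mp hc with rfl | hc
        · exact ⟨orbitList_ne_nil (hper x), orbitList_rotate (hper x)⟩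
        · exact hL1 c hc
      · simp only [List.flatten_cons]
        rw [List.nodup_append]
        refine ⟨orbitList_nodup, hL2, ?_⟩
        intro y hy z hyL hyz
        subst hyz
        have : y ∈ s' := by rw [← hL3, List.mem_toFinset]; exact hyL
        rw [hs', Finset.mem_sdiff, List.mem_toFinset] at this
        exact this.2 hy
      · simp only [List.flatten_cons, List.toFinset_append, hL3]
        rw [hs']
        apply Finset.union_sdiff_of_subset
        intro y hy
        rw [List.mem_toFinset] at hy
        exact horbsub y hy


end Orbits

section Assemble
variable {α : Type*} [DecidableEq α] [Fintype α] (S : α → α → ℝ)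

lemma flatten_map_perm (g : List α → List α) :
    ∀ L : List (List α), (∀ c ∈ L, (g c).Perm c) → ((L.map g).flatten).Perm L.flatten
  | [], _ => by simp
  | c :: L, h => by
    simp only [List.map_cons, List.flatten_cons]
    exact (h c (by simp)).append (flatten_map_perm g L (fun d hd => h d (by simp [hd])))

lemma getLast_ne_head (l : List α) (hnd : l.Nodup) (h2 : 2 ≤ l.length) (h : l ≠ []) :
    l.getLast h ≠ l.head h := by
  cases l with
  | nil => simp at h2
  | cons x t =>
    have htne : t ≠ [] := by intro hh; subst hh; simp at h2
    rw [List.getLast_cons htne, List.head_cons]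
    intro hc
    exact (List.nodup_cons.mp hnd).1 (hc ▸ List.getLast_mem htne)

lemma filter_fst_card (E : List (α × α)) (hnd : (E.map Prod.fst).Nodup) (i : α)
    (hmem : i ∈ E.map Prod.fst) :
    (E.toFinset.filter fun p => p.1 = i).card = 1 := by
  obtain ⟨p, hp, hpi⟩ := List.mem_map.mp hmem
  rw [Finset.card_eq_one]
  refine ⟨p, ?_⟩
  ext q
  simp only [Finset.mem_filter, List.mem_toFinset, Finset.mem_singleton]
  constructor
  · rintro ⟨hq, hqi⟩
    exact List.inj_on_of_nodup_map hnd hq hp (by rw [hqi, hpi])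
  · rintro rfl
    exact ⟨hp, hpi⟩

lemma filter_snd_card (E : List (α × α)) (hnd : (E.map Prod.snd).Nodup) (j : α)
    (hmem : j ∈ E.map Prod.snd) :
    (E.toFinset.filter fun p => p.2 = j).card = 1 := by
  obtain ⟨p, hp, hpi⟩ := List.mem_map.mp hmem
  rw [Finset.card_eq_one]
  refine ⟨p, ?_⟩
  ext q
  simp only [Finset.mem_filter, List.mem_toFinset, Finset.mem_singleton]
  constructor
  · rintro ⟨hq, hqi⟩
    exact List.inj_on_of_nodup_map hnd hq hp (by rw [hqi, hpi])
  · rintro rfl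
    exact ⟨hp, hpi⟩

lemma append_shuffle (a b c d : List α) : ((a ++ b) ++ (c ++ d)).Perm ((a ++ c) ++ (b ++ d)) := by
  rw [List.perm_iff_count]
  intro x
  simp only [List.count_append]
  omega

lemma altSplit_flatten_perm :
    ∀ L : List (List α),
      ((L.map (fun c => (altSplit c).1)).flatten ++ (L.map (fun c => (altSplit c).2)).flatten).Perm
        L.flatten
  | [] => by simp
  | c :: L => by
    simp only [List.map_cons, List.flatten_cons]
    exact (append_shuffle _ _ _ _).trans
      ((altSplit_perm c).append (altSplit_flatten_perm L))

lemma altSplit_flatten_length :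
    ∀ L : List (List α), (∀ c ∈ L, Even c.length) →
      (L.map (fun c => (altSplit c).1)).flatten.length
        = (L.map (fun c => (altSplit c).2)).flatten.length
  | [], _ => by simp
  | c :: L, h => by
    simp only [List.map_cons, List.flatten_cons, List.length_append]
    have h1 := altSplit_length (α := α) c
    have he := h c (by simp)
    have : (altSplit c).1.length = (altSplit c).2.length := by
      obtain ⟨k, hk⟩ := he
      omega
    rw [this, altSplit_flatten_length L (fun d hd => h d (by simp [hd]))]

lemma assemble (L : List (List α))
    (hL : ∀ c ∈ L, 2 ≤ c.length ∧ Even c.length)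
    (hnd : L.flatten.Nodup) (hcov : L.flatten.toFinset = Finset.univ) :
    ∃ (A₁ A₂ : Finset α) (M : Finset (α × α)),
      Disjoint A₁ A₂ ∧ A₁ ∪ A₂ = Finset.univ ∧
      2 * A₁.card = Fintype.card α ∧ 2 * A₂.card = Fintype.card α ∧
      ((∀ i : α, (M.filter fun p => p.1 = i).card = 1) ∧
       (∀ j : α, (M.filter fun p => p.2 = j).card = 1) ∧
       ∀ i : α, (i, i) ∉ M) ∧
      (∀ p ∈ M, (p.1 ∈ A₁ ∧ p.2 ∈ A₂) ∨ (p.1 ∈ A₂ ∧ p.2 ∈ A₁)) ∧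
      (∑ p ∈ M, S p.1 p.2) = (L.map (cw S)).sum := by
  classical
  have hcne : ∀ c ∈ L, c ≠ [] := by
    intro c hc h
    have := (hL c hc).1
    subst h; simp at this
  have hcnd : ∀ c ∈ L, c.Nodup := fun c hc => ((List.nodup_flatten.mp hnd).1 c hc)
  set Elist := (L.map (fun c => c.zip (c.rotate 1))).flatten with hE
  have hfst : Elist.map Prod.fst = L.flatten := by
    rw [hE, List.map_flatten, List.map_map]
    have heq : List.map (List.map Prod.fst ∘ fun c => c.zip (c.rotate 1)) L = List.map id L :=
      List.map_congr_left (fun c hc => by simpa using List.map_fst_zip (l₁ := c) (l₂ := c.rotate 1) (by simp))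
    rw [heq, List.map_id]
  have hsndperm : (Elist.map Prod.snd).Perm L.flatten := by
    rw [hE, List.map_flatten, List.map_map]
    have heq : (List.map (List.map Prod.snd ∘ fun c => c.zip (c.rotate 1)) L)
        = L.map (fun c => c.rotate 1) := by
      apply List.map_congr_left
      intro c hc
      exact List.map_snd_zip (by simp)
    rw [heq]
    exact flatten_map_perm _ L (fun c _ => List.rotate_perm c 1)
  have hfstnd : (Elist.map Prod.fst).Nodup := hfst ▸ hnd
  have hsndnd : (Elist.map Prod.snd).Nodup := hsndperm.nodup_iff.mpr hnd
  have hEnd : Elist.Nodup := List.Nodup.of_map _ hfstnd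
  set A1l := (L.map (fun c => (altSplit c).1)).flatten with hA1
  set A2l := (L.map (fun c => (altSplit c).2)).flatten with hA2
  have hAperm : (A1l ++ A2l).Perm L.flatten := altSplit_flatten_perm L
  have hAnd : (A1l ++ A2l).Nodup := hAperm.nodup_iff.mpr hnd
  have hmemE : ∀ p ∈ Elist, ∃ c ∈ L, p ∈ c.zip (c.rotate 1) := by
    intro p hp
    rw [hE] at hp
    obtain ⟨l, hl, hpl⟩ := List.mem_flatten.mp hp
    obtain ⟨c, hc, rfl⟩ := List.mem_map.mp hl
    exact ⟨c, hc, hpl⟩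
  refine ⟨A1l.toFinset, A2l.toFinset, Elist.toFinset, ?_, ?_, ?_, ?_, ⟨?_, ?_, ?_⟩, ?_, ?_⟩
  · rw [Finset.disjoint_left]
    intro x hx1 hx2
    rw [List.mem_toFinset] at hx1 hx2
    exact List.disjoint_of_nodup_append hAnd hx1 hx2
  · rw [← List.toFinset_append, List.toFinset_eq_of_perm _ _ hAperm, hcov]
  · have hlen : A1l.length = A2l.length :=
      altSplit_flatten_length L (fun c hc => (hL c hc).2)
    have htot : A1l.length + A2l.length = Fintype.card α := by
      have := hAperm.length_eq
      rw [List.length_append] at this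
      rw [this]
      rw [← List.toFinset_card_of_nodup hnd, hcov, Finset.card_univ]
    rw [List.toFinset_card_of_nodup (List.nodup_append.mp hAnd).1]
    omega
  · have hlen : A1l.length = A2l.length :=
      altSplit_flatten_length L (fun c hc => (hL c hc).2)
    have htot : A1l.length + A2l.length = Fintype.card α := by
      have := hAperm.length_eq
      rw [List.length_append] at this
      rw [this]
      rw [← List.toFinset_card_of_nodup hnd, hcov, Finset.card_univ]
    rw [List.toFinset_card_of_nodup (List.nodup_append.mp hAnd).2.1]
    omega
  · intro i
    apply filter_fst_card Elist hfstnd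
    rw [hfst]
    rw [← List.mem_toFinset, hcov]
    exact Finset.mem_univ i
  · intro j
    apply filter_snd_card Elist hsndnd
    rw [hsndperm.mem_iff, ← List.mem_toFinset, hcov]
    exact Finset.mem_univ j
  · intro i hi
    rw [List.mem_toFinset] at hi
    obtain ⟨c, hc, hpc⟩ := hmemE _ hi
    rw [zip_rotate_eq c (hcne c hc)] at hpc
    rcases List.mem_append.mp hpc with h | h
    · exact pathPairs_ne c (hcnd c hc) _ h rfl
    · have heq : ((i, i) : α × α) = (c.getLast (hcne c hc), c.head (hcne c hc)) := by
        simpa using h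
      have h1 : i = c.getLast (hcne c hc) := congrArg Prod.fst heq
      have h2 : i = c.head (hcne c hc) := congrArg Prod.snd heq
      exact getLast_ne_head c (hcnd c hc) (hL c hc).1 (hcne c hc) (h1 ▸ h2 ▸ rfl)
  · intro p hp
    rw [List.mem_toFinset] at hp
    obtain ⟨c, hc, hpc⟩ := hmemE _ hp
    have hsub1 : ∀ x ∈ (altSplit c).1, x ∈ A1l.toFinset := by
      intro x hx
      rw [List.mem_toFinset, hA1]
      exact List.mem_flatten.mpr ⟨(altSplit c).1, List.mem_map_of_mem hc, hx⟩
    have hsub2 : ∀ x ∈ (altSplit c).2, x ∈ A2l.toFinset := by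
      intro x hx
      rw [List.mem_toFinset, hA2]
      exact List.mem_flatten.mpr ⟨(altSplit c).2, List.mem_map_of_mem hc, hx⟩
    rw [zip_rotate_eq c (hcne c hc)] at hpc
    rcases List.mem_append.mp hpc with h | h
    · rcases pathPairs_cross c p h with ⟨h1, h2⟩ | ⟨h1, h2⟩
      · exact Or.inl ⟨hsub1 _ h1, hsub2 _ h2⟩
      · exact Or.inr ⟨hsub2 _ h1, hsub1 _ h2⟩
    · have heq : p = (c.getLast (hcne c hc), c.head (hcne c hc)) := by simpa using h
      subst heq
      refine Or.inr ⟨hsub2 _ ?_, hsub1 _ (head_mem_altSplit c (hcne c hc))⟩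
      exact (getLast_mem_altSplit c (hcne c hc)).1 (hL c hc).2
  · rw [List.sum_toFinset _ hEnd, hE, List.map_flatten, List.sum_flatten, List.map_map,
      List.map_map]
    rfl


end Assemble

lemma even_sum_of_even : ∀ l : List ℕ, (∀ x ∈ l, Even x) → Even l.sum
  | [], _ => by simp
  | x :: t, h => by
    simp only [List.sum_cons]
    exact (h x (by simp)).add (even_sum_of_even t (fun y hy => h y (by simp [hy])))

lemma odd_count : ∀ l : List ℕ, (∀ x ∈ l, ¬ Even x) → (Even l.sum ↔ Even l.length)
  | [], _ => by simp
  | x :: t, h => by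
    simp only [List.sum_cons, List.length_cons]
    have hx := h x (by simp)
    have iht := odd_count t (fun y hy => h y (by simp [hy]))
    constructor
    · intro he
      rw [Nat.even_add] at he
      rw [Nat.even_add_one, ← iht]
      simp only [hx, false_iff] at he
      exact he
    · intro he
      rw [Nat.even_add_one] at he
      rw [Nat.even_add]
      simp only [hx, false_iff]
      rw [← iht] at he
      exact he


end Stmt1Aux

def IsAssignment (n k : ℕ) (M : Finset (Fin n × Fin n)) : Prop :=
  (∀ i : Fin n, (M.filter fun p => p.1 = i).card = k) ∧
  (∀ j : Fin n, (M.filter fun p => p.2 = j).card = k) ∧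
  ∀ i : Fin n, (i, i) ∉ M

noncomputable def simVal {n : ℕ} (S : Fin n → Fin n → ℝ) (M : Finset (Fin n × Fin n)) : ℝ :=
  ∑ p ∈ M, S p.1 p.2

noncomputable def OptSim (n k : ℕ) (S : Fin n → Fin n → ℝ) : ℝ :=
  sSup {x : ℝ | ∃ M : Finset (Fin n × Fin n), IsAssignment n k M ∧ simVal S M = x}

def Respects {n : ℕ} (A₁ A₂ : Finset (Fin n)) (M : Finset (Fin n × Fin n)) : Prop :=
  ∀ p ∈ M, (p.1 ∈ A₁ ∧ p.2 ∈ A₂) ∨ (p.1 ∈ A₂ ∧ p.2 ∈ A₁)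


namespace Stmt1Aux

lemma perm_assignment {n : ℕ} (σ : Equiv.Perm (Fin n)) (hfpf : ∀ i, σ i ≠ i) :
    IsAssignment n 1 (Finset.univ.image fun i => (i, σ i)) := by
  refine ⟨?_, ?_, ?_⟩
  · intro i
    rw [Finset.card_eq_one]
    refine ⟨(i, σ i), ?_⟩
    ext p
    simp only [Finset.mem_filter, Finset.mem_image, Finset.mem_univ, true_and,
      Finset.mem_singleton]
    constructor
    · rintro ⟨⟨j, rfl⟩, hj⟩
      simp only at hj
      subst hj
      rfl
    · rintro rfl
      exact ⟨⟨i, rfl⟩, rfl⟩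
  · intro j
    rw [Finset.card_eq_one]
    refine ⟨(σ⁻¹ j, j), ?_⟩
    ext p
    simp only [Finset.mem_filter, Finset.mem_image, Finset.mem_univ, true_and,
      Finset.mem_singleton]
    constructor
    · rintro ⟨⟨i, rfl⟩, hj⟩
      simp only at hj
      subst hj
      simp
    · rintro rfl
      exact ⟨⟨σ⁻¹ j, by simp⟩, rfl⟩
  · intro i hi
    simp only [Finset.mem_image, Finset.mem_univ, true_and] at hi
    obtain ⟨j, hj⟩ := hi
    have h1 : j = i := congrArg Prod.fst hj
    subst h1
    exact hfpf j (congrArg Prod.snd hj)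


end Stmt1Aux

theorem stmt1 (n : ℕ) (hn : 2 ≤ n) (heven : Even n)
    (S : Fin n → Fin n → ℝ) (hS : ∀ i j, 0 ≤ S i j ∧ S i j ≤ 1) :
    ∃ (A₁ A₂ : Finset (Fin n)) (M : Finset (Fin n × Fin n)),
      Disjoint A₁ A₂ ∧ A₁ ∪ A₂ = Finset.univ ∧
      A₁.card = n / 2 ∧ A₂.card = n / 2 ∧
      IsAssignment n 1 M ∧ Respects A₁ A₂ M ∧
      (2 / 3 : ℝ) * OptSim n 1 S ≤ simVal S M := by
  classical
  have hS0 : ∀ i j, 0 ≤ S i j := fun i j => (hS i j).1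
  -- the set of achievable values
  set V : Set ℝ := {x : ℝ | ∃ M : Finset (Fin n × Fin n), IsAssignment n 1 M ∧ simVal S M = x}
    with hV
  have hVfin : V.Finite := by
    have : V ⊆ (fun M => simVal S M) '' Set.univ := by
      rintro x ⟨M, _, rfl⟩
      exact ⟨M, trivial, rfl⟩
    exact (Set.finite_univ.image _).subset this
  have hVne : V.Nonempty := by
    haveI : NeZero n := ⟨by omega⟩
    refine ⟨simVal S (Finset.univ.image fun i => (i, Equiv.addLeft (1 : Fin n) i)),
      ⟨_, Stmt1Aux.perm_assignment _ ?_, rfl⟩⟩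
    intro i hc
    have h0 : (1 : Fin n) + i = i := hc
    have h1 : (1 : Fin n) = 0 := by
      have := add_right_cancel (b := i) (a := (1 : Fin n)) (c := 0) (by simpa using h0)
      exact this
    have h2 := congrArg Fin.val h1
    rw [Fin.val_one'] at h2
    rw [Nat.mod_eq_of_lt (by omega)] at h2
    simp at h2
  -- Opt is attained
  have hopt : OptSim n 1 S ∈ V := hVne.csSup_mem hVfin
  obtain ⟨M₀, hM₀, hM₀val⟩ := hopt
  obtain ⟨hM₀1, hM₀2, hM₀3⟩ := hM₀
  -- extract the successor function
  have hex : ∀ i : Fin n, ∃ p : Fin n × Fin n, M₀.filter (fun p => p.1 = i) = {p} :=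
    fun i => Finset.card_eq_one.mp (hM₀1 i)
  choose P hP using hex
  set f : Fin n → Fin n := fun i => (P i).2 with hf
  have hPmem : ∀ i, (i, f i) ∈ M₀ := by
    intro i
    have h1 : P i ∈ M₀.filter (fun p => p.1 = i) := by rw [hP i]; simp
    rw [Finset.mem_filter] at h1
    have : P i = (i, f i) := by
      rw [hf]
      exact Prod.ext h1.2 rfl
    rw [← this]
    exact h1.1
  have hMeq : ∀ p ∈ M₀, p = (p.1, f p.1) := by
    intro p hp
    have h1 : p ∈ M₀.filter (fun q => q.1 = p.1) := by rw [Finset.mem_filter]; exact ⟨hp, rfl⟩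
    have h2 : (p.1, f p.1) ∈ M₀.filter (fun q => q.1 = p.1) := by
      rw [Finset.mem_filter]; exact ⟨hPmem p.1, rfl⟩
    rw [hP p.1, Finset.mem_singleton] at h1 h2
    rw [h1, ← h2]
  have hinj : Function.Injective f := by
    intro a b hab
    have h1 : (a, f a) ∈ M₀.filter (fun p => p.2 = f a) := by
      rw [Finset.mem_filter]; exact ⟨hPmem a, rfl⟩
    have h2 : (b, f b) ∈ M₀.filter (fun p => p.2 = f a) := by
      rw [Finset.mem_filter]; exact ⟨hPmem b, by rw [← hab]⟩
    obtain ⟨q, hq⟩ := Finset.card_eq_one.mp (hM₀2 (f a))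
    rw [hq, Finset.mem_singleton] at h1 h2
    have := h1.trans h2.symm
    exact congrArg Prod.fst this
  have hfpf : ∀ i, f i ≠ i := by
    intro i hc
    exact hM₀3 i (by have := hPmem i; rwa [hc] at this)
  -- f is a permutation; all points periodic
  have hbij : Function.Bijective f := (Finite.injective_iff_bijective).mp hinj
  set σ : Equiv.Perm (Fin n) := Equiv.ofBijective f hbij with hσ
  have hper : ∀ x : Fin n, x ∈ Function.periodicPts f := by
    intro x
    refine ⟨orderOf σ, orderOf_pos σ, ?_⟩
    show f^[orderOf σ] x = x
    have hcoe : ⇑σ = f := rfl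
    have h1 : ⇑(σ ^ orderOf σ) = f^[orderOf σ] := by
      rw [Equiv.Perm.coe_pow, hcoe]
    rw [← h1, pow_orderOf_eq_one σ]
    rfl
  -- simVal of M₀
  have hM₀img : M₀ = Finset.univ.image fun i => (i, f i) := by
    apply Finset.Subset.antisymm
    · intro p hp
      rw [Finset.mem_image]
      exact ⟨p.1, Finset.mem_univ _, (hMeq p hp).symm⟩
    · intro p hp
      rw [Finset.mem_image] at hp
      obtain ⟨i, _, rfl⟩ := hp
      exact hPmem i
  have hval : simVal S M₀ = ∑ i : Fin n, S i (f i) := by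
    rw [simVal, hM₀img, Finset.sum_image (by intro a _ b _ h; exact congrArg Prod.fst h)]
  -- cycle cover
  obtain ⟨L₀, hL₀c, hL₀nd, hL₀cov⟩ := Stmt1Aux.cover hinj hper Finset.univ (by simp)
  have hL₀2 : ∀ c ∈ L₀, 2 ≤ c.length := by
    intro c hc
    obtain ⟨hne, hcyc⟩ := hL₀c c hc
    rcases c with _ | ⟨x, _ | ⟨y, t⟩⟩
    · exact absurd rfl hne
    · exfalso
      have : [x].rotate 1 = [x].map f := hcyc
      simp [List.rotate_singleton] at this
      exact hfpf x this.symm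
    · simp only [List.length_cons]
      omega
  -- split into even and odd cycles
  set p : List (Fin n) → Bool := fun c => decide (Even c.length) with hp'
  set ev := L₀.filter p with hev
  set od := L₀.filter (fun c => !p c) with hod
  have hsplit : (ev ++ od).Perm L₀ := List.filter_append_perm p L₀
  have hevm : ∀ c ∈ ev, c ∈ L₀ ∧ Even c.length := by
    intro c hc
    rw [hev, List.mem_filter] at hc
    exact ⟨hc.1, by simpa [hp'] using hc.2⟩
  have hodm : ∀ c ∈ od, c ∈ L₀ ∧ ¬ Even c.length := by
    intro c hc
    rw [hod, List.mem_filter] at hc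
    refine ⟨hc.1, ?_⟩
    simpa [hp'] using hc.2
  -- total length is n
  have hlen_n : L₀.flatten.length = n := by
    rw [← List.toFinset_card_of_nodup hL₀nd, hL₀cov]
    simp
  have hod_even : Even od.length := by
    have h1 : (L₀.map List.length).sum = n := by rw [← List.length_flatten]; exact hlen_n
    have h2 : ((ev ++ od).map List.length).sum = n := by
      rw [(hsplit.map List.length).sum_eq]; exact h1
    rw [List.map_append, List.sum_append] at h2
    have h3 : Even (ev.map List.length).sum :=
      Stmt1Aux.even_sum_of_even _ (by
        intro x hx
        obtain ⟨c, hc, rfl⟩ := List.mem_map.mp hx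
        exact (hevm c hc).2)
    have h4 : Even (od.map List.length).sum := by
      have : Even ((ev.map List.length).sum + (od.map List.length).sum) := by
        rw [h2]; exact heven
      rcases h3 with ⟨a, ha⟩
      rcases this with ⟨b, hb⟩
      exact ⟨b - a, by omega⟩
    have h5 := (Stmt1Aux.odd_count (od.map List.length) (by
      intro x hx
      obtain ⟨c, hc, rfl⟩ := List.mem_map.mp hx
      exact (hodm c hc).2)).mp h4
    simpa using h5
  -- pair up odd cycles
  obtain ⟨cs, hcs1, hcs2, hcs3⟩ := Stmt1Aux.pairUp S f hS0 od.length od rfl hod_even (by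
    intro c hc
    obtain ⟨hcL, hcodd⟩ := hodm c hc
    refine ⟨(hL₀c c hcL).2, ?_, Nat.not_even_iff_odd.mp hcodd⟩
    have h2 := hL₀2 c hcL
    obtain ⟨k, hk⟩ := Nat.not_even_iff_odd.mp hcodd
    omega)
  -- the final cycle structure
  set Lf := ev ++ cs with hLf
  have hLfperm : Lf.flatten.Perm L₀.flatten := by
    rw [hLf, List.flatten_append]
    have h1 : (ev.flatten ++ cs.flatten).Perm (ev.flatten ++ od.flatten) :=
      List.Perm.append_left _ hcs2
    refine h1.trans ?_
    rw [← List.flatten_append]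
    exact hsplit.flatten
  have hLfnd : Lf.flatten.Nodup := hLfperm.nodup_iff.mpr hL₀nd
  have hLfcov : Lf.flatten.toFinset = Finset.univ := by
    rw [List.toFinset_eq_of_perm _ _ hLfperm, hL₀cov]
  have hLfgood : ∀ c ∈ Lf, 2 ≤ c.length ∧ Even c.length := by
    intro c hc
    rw [hLf, List.mem_append] at hc
    rcases hc with hc | hc
    · exact ⟨hL₀2 c (hevm c hc).1, (hevm c hc).2⟩
    · exact hcs1 c hc
  obtain ⟨A₁, A₂, M, hdisj, hunion, hcard1, hcard2, hassign, hresp, hsum⟩ :=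
    Stmt1Aux.assemble S Lf hLfgood hLfnd hLfcov
  refine ⟨A₁, A₂, M, hdisj, hunion, ?_, ?_, hassign, hresp, ?_⟩
  · rw [Fintype.card_fin] at hcard1; omega
  · rw [Fintype.card_fin] at hcard2; omega
  · -- weight chain
    have hev_eq : (ev.map (Stmt1Aux.cw S)).sum = (ev.map (Stmt1Aux.sw S f)).sum := by
      congr 1
      apply List.map_congr_left
      intro c hc
      exact Stmt1Aux.cw_of_cycle S f c (hL₀c c (hevm c hc).1).2
    have hev_nonneg : 0 ≤ (ev.map (Stmt1Aux.sw S f)).sum := by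
      apply List.sum_nonneg
      intro x hx
      obtain ⟨c, hc, rfl⟩ := List.mem_map.mp hx
      exact Stmt1Aux.sw_nonneg S f c hS0
    have htotal : (ev.map (Stmt1Aux.sw S f)).sum + (od.map (Stmt1Aux.sw S f)).sum
        = (L₀.map (Stmt1Aux.sw S f)).sum := by
      rw [← List.sum_append, ← List.map_append]
      exact (hsplit.map _).sum_eq
    have hswsum : (L₀.map (Stmt1Aux.sw S f)).sum = ∑ i : Fin n, S i (f i) := by
      have h1 : (L₀.flatten.map (fun y => S y (f y))).sum = (L₀.map (Stmt1Aux.sw S f)).sum := by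
        rw [List.map_flatten, List.sum_flatten, List.map_map]
        rfl
      rw [← h1, ← List.sum_toFinset _ hL₀nd, hL₀cov]
    have hLfsum : (Lf.map (Stmt1Aux.cw S)).sum
        = (ev.map (Stmt1Aux.cw S)).sum + (cs.map (Stmt1Aux.cw S)).sum := by
      rw [hLf, List.map_append, List.sum_append]
    have hopt_eq : OptSim n 1 S = ∑ i : Fin n, S i (f i) := by rw [← hM₀val, hval]
    have hsimM : simVal S M = (Lf.map (Stmt1Aux.cw S)).sum := hsum
    rw [hsimM, hopt_eq, hLfsum, hev_eq]
    have := hcs3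
    linarith
end

section
/- Let ℓ ≥ 2 be an integer and let w : Z_ℓ → ℝ be nonnegative, where w(i) is interpreted as the weight of the cycle edge from i to i+1 (mod ℓ). Then there exists a function f : Z_ℓ → {0,1} such that the two level sets of f have sizes ⌈ℓ/2⌉ and ⌊ℓ/2⌋, and Σ_{i ∈ Z_ℓ : f(i) ≠ f(i+1)} w(i) ≥ (2/3)·Σ_{i ∈ Z_ℓ} w(i). -/
open Finset

lemma range_filter_odd_card (n : ℕ) :
    ((Finset.range n).filter fun v => v % 2 = 1).card = n / 2 := by
  induction n with
  | zero => simp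
  | succ n ih =>
    rw [Finset.range_add_one, Finset.filter_insert]
    by_cases h : n % 2 = 1
    · rw [if_pos h, Finset.card_insert_of_notMem (by simp), ih]
      omega
    · rw [if_neg h, ih]
      omega

lemma zmod_count (ℓ : ℕ) [NeZero ℓ] (s : ZMod ℓ) :
    (Finset.univ.filter fun i : ZMod ℓ => (i - s).val % 2 = 1).card = ℓ / 2 := by
  rw [← range_filter_odd_card ℓ]
  apply Finset.card_bij' (fun i _ => (i - s).val) (fun v _ => (v : ZMod ℓ) + s)
  · intro a ha
    simp only [Finset.mem_filter, Finset.mem_univ, true_and] at ha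
    simp [Finset.mem_filter, Finset.mem_range, ZMod.val_lt, ha]
  · intro v hv
    simp only [Finset.mem_filter, Finset.mem_range] at hv
    simp [ZMod.val_cast_of_lt hv.1, hv.2]
  · intro a _
    simp [ZMod.natCast_val, ZMod.cast_id]
  · intro v hv
    simp only [Finset.mem_filter, Finset.mem_range] at hv
    simp [ZMod.val_cast_of_lt hv.1]

theorem stmt10 (ℓ : ℕ) [NeZero ℓ] (hℓ : 2 ≤ ℓ) (w : ZMod ℓ → ℝ) (hw : ∀ i, 0 ≤ w i) :
    ∃ f : ZMod ℓ → Bool,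
      (((Finset.univ.filter fun i => f i = true).card = (ℓ + 1) / 2 ∧
        (Finset.univ.filter fun i => f i = false).card = ℓ / 2) ∨
       ((Finset.univ.filter fun i => f i = true).card = ℓ / 2 ∧
        (Finset.univ.filter fun i => f i = false).card = (ℓ + 1) / 2)) ∧
      (2 / 3 : ℝ) * ∑ i, w i ≤ ∑ i ∈ Finset.univ.filter (fun i => f i ≠ f (i + 1)), w i := by
  have hfact : Fact (1 < ℓ) := ⟨hℓ⟩
  obtain ⟨j, -, hj⟩ := Finset.exists_min_image Finset.univ w ⟨0, Finset.mem_univ 0⟩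
  set s : ZMod ℓ := j + 1 with hs
  refine ⟨fun i => decide ((i - s).val % 2 = 1), ?_, ?_⟩
  · right
    have htrue : (Finset.univ.filter fun i : ZMod ℓ =>
        decide ((i - s).val % 2 = 1) = true).card = ℓ / 2 := by
      rw [← zmod_count ℓ s]
      congr 1
      ext i
      simp
    constructor
    · exact htrue
    · have hsum := Finset.card_filter_add_card_filter_not
        (s := (Finset.univ : Finset (ZMod ℓ)))
        (fun i => decide ((i - s).val % 2 = 1) = true)
      have hcard : (Finset.univ : Finset (ZMod ℓ)).card = ℓ := by
        simp [ZMod.card]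
      have hfalse : (Finset.univ.filter fun i : ZMod ℓ =>
          decide ((i - s).val % 2 = 1) = false).card
          = (Finset.univ.filter fun i : ZMod ℓ =>
            ¬ (decide ((i - s).val % 2 = 1) = true)).card := by
        congr 1
        ext i
        simp
      rw [hfalse]
      omega
  · -- edge flip lemma
    have key : ∀ i : ZMod ℓ, (i - s).val + 1 < ℓ →
        decide ((i - s).val % 2 = 1) ≠ decide (((i + 1) - s).val % 2 = 1) := by
      intro i hi
      have h1 : (i + 1) - s = (i - s) + 1 := by ring
      have h2 : ((i - s) + 1).val = (i - s).val + 1 := by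
        rw [ZMod.val_add_of_lt]
        · rw [ZMod.val_one]
        · rw [ZMod.val_one]; exact hi
      rw [h1, h2]
      simp only [ne_eq, decide_eq_decide]
      omega
    have hvallt : ∀ x : ZMod ℓ, x.val < ℓ := fun x => ZMod.val_lt x
    obtain ⟨m, rfl⟩ : ∃ m, ℓ = m + 1 := ⟨ℓ - 1, by omega⟩
    have hneg : (-1 : ZMod (m + 1)).val = m := ZMod.val_neg_one m
    rcases Nat.even_or_odd (m + 1) with he | ho
    · -- even case: all edges bichromatic
      have hall2 : ∀ i : ZMod (m+1), decide ((i - s).val % 2 = 1) ≠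
          decide (((i + 1) - s).val % 2 = 1) := by
        intro i
        by_cases hi : (i - s).val + 1 < m + 1
        · exact key i hi
        · have hval : (i - s).val = m := by have := hvallt (i - s); omega
          have : i - s = -1 := ZMod.val_injective _ (by rw [hval, hneg])
          have h1 : (i + 1) - s = 0 := by rw [sub_eq_zero]; linear_combination this
          have hm : m % 2 = 1 := by
            rcases he with ⟨k, hk⟩; omega
          rw [h1, ZMod.val_zero, hval, hm]
          simp
      have hall : (Finset.univ.filter fun i : ZMod (m+1) =>
          (fun i => decide ((i - s).val % 2 = 1)) i ≠
          (fun i => decide ((i - s).val % 2 = 1)) (i + 1)) = Finset.univ := by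
        ext i
        simp only [Finset.mem_filter, Finset.mem_univ, true_and, ne_eq, iff_true]
        exact hall2 i
      rw [hall]
      have hT : (0 : ℝ) ≤ ∑ i, w i := Finset.sum_nonneg fun i _ => hw i
      linarith
    · -- odd case: all edges except j bichromatic
      have h3 : 3 ≤ m + 1 := by rcases ho with ⟨k, hk⟩; omega
      have hsub : Finset.univ.erase j ⊆ Finset.univ.filter fun i : ZMod (m+1) =>
          (fun i => decide ((i - s).val % 2 = 1)) i ≠
          (fun i => decide ((i - s).val % 2 = 1)) (i + 1) := by
        intro i hi
        rw [Finset.mem_erase] at hi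
        simp only [Finset.mem_filter, Finset.mem_univ, true_and, ne_eq]
        have hval : (i - s).val ≠ m := by
          intro h
          have : i - s = -1 := ZMod.val_injective _ (by rw [h, hneg])
          have : i = j := by linear_combination this
          exact hi.1 this
        exact key i (by have := hvallt (i - s); omega)
      have hle : ∑ i ∈ Finset.univ.erase j, w i ≤
          ∑ i ∈ Finset.univ.filter (fun i : ZMod (m+1) =>
            (fun i => decide ((i - s).val % 2 = 1)) i ≠
            (fun i => decide ((i - s).val % 2 = 1)) (i + 1)), w i :=
        Finset.sum_le_sum_of_subset_of_nonneg hsub (fun i _ _ => hw i)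
      have herase : ∑ i ∈ Finset.univ.erase j, w i = (∑ i, w i) - w j :=
        Finset.sum_erase_eq_sub (Finset.mem_univ j)
      have hmin : ((m + 1 : ℕ) : ℝ) * w j ≤ ∑ i, w i := by
        have := Finset.card_nsmul_le_sum Finset.univ w (w j)
          (fun i _ => hj i (Finset.mem_univ i))
        have hcard : (Finset.univ : Finset (ZMod (m+1))).card = m + 1 := by
          simp [ZMod.card]
        rw [hcard, nsmul_eq_mul] at this
        exact_mod_cast this
      have h3r : (3 : ℝ) ≤ ((m + 1 : ℕ) : ℝ) := by exact_mod_cast h3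
      have hwj : 3 * w j ≤ ∑ i, w i := by
        nlinarith [hw j]
      calc (2 / 3 : ℝ) * ∑ i, w i ≤ (∑ i, w i) - w j := by linarith
        _ = ∑ i ∈ Finset.univ.erase j, w i := herase.symm
        _ ≤ _ := hle
end

section
/- Let k ≥ 1, let V be a finite set, let M be a finite set of ordered pairs (i,j) ∈ V × V with nonnegative weights w(i,j), and let f : V → {1,…,2k+2} be a coloring such that f(i) ≠ f(j) for every (i,j) ∈ M. Then there exists a subset T ⊆ {1,…,2k+2} with |T| = k+1 such that Σ_{(i,j) ∈ M : |T ∩ {f(i), f(j)}| = 1} w(i,j) ≥ ((k+1)/(2k+1))·Σ_{(i,j) ∈ M} w(i,j). -/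
lemma split_count {α : Type*} [DecidableEq α] (s : Finset α) (a b : α) (ha : a ∈ s)
    (hb : b ∈ s) (hab : a ≠ b) (m : ℕ) :
    ((s.powersetCard (m+1)).filter (fun T => a ∈ T ∧ b ∉ T)).card = (s.card - 2).choose m := by
  have key : ((s.powersetCard (m+1)).filter (fun T => a ∈ T ∧ b ∉ T)).card =
      (((s.erase b).erase a).powersetCard m).card := by
    apply Finset.card_bij (fun T _ => T.erase a)
    · intro T hT
      simp only [Finset.mem_filter, Finset.mem_powersetCard] at hT ⊢
      obtain ⟨⟨hsub, hcard⟩, haT, hbT⟩ := hT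
      refine ⟨?_, ?_⟩
      · intro x hx
        simp only [Finset.mem_erase] at hx ⊢
        exact ⟨hx.1, fun h => hbT (h ▸ hx.2), hsub hx.2⟩
      · rw [Finset.card_erase_of_mem haT, hcard]
        omega
    · intro T1 h1 T2 h2 heq
      simp only [Finset.mem_filter, Finset.mem_powersetCard] at h1 h2
      have := congrArg (insert a) heq
      rwa [Finset.insert_erase h1.2.1, Finset.insert_erase h2.2.1] at this
    · intro U hU
      simp only [Finset.mem_powersetCard] at hU
      have haU : a ∉ U := fun h => by
        have := hU.1 h; simp [Finset.mem_erase] at this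
      refine ⟨insert a U, ?_, by rw [Finset.erase_insert haU]⟩
      simp only [Finset.mem_filter, Finset.mem_powersetCard]
      refine ⟨⟨?_, ?_⟩, Finset.mem_insert_self a U, ?_⟩
      · intro x hx
        rcases Finset.mem_insert.mp hx with h | h
        · exact h ▸ ha
        · have := hU.1 h; simp only [Finset.mem_erase] at this; exact this.2.2
      · rw [Finset.card_insert_of_notMem haU, hU.2]
      · intro hbU
        rcases Finset.mem_insert.mp hbU with h | h
        · exact hab h.symm
        · have := hU.1 h; simp [Finset.mem_erase] at this
  rw [key, Finset.card_powersetCard,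
    Finset.card_erase_of_mem (Finset.mem_erase.mpr ⟨hab, ha⟩), Finset.card_erase_of_mem hb]
  congr 1

lemma choose_id (k : ℕ) :
    (((2*k+2).choose (k+1) : ℝ)) * (k+1) = 2 * ((2*k).choose k) * (2*k+1) := by
  have h1 : ((2*k+2 : ℕ) : ℝ) * (2*k+1).choose k = (2*k+2).choose (k+1) * (k+1) := by
    exact_mod_cast congrArg (Nat.cast (R := ℝ)) (Nat.add_one_mul_choose_eq (2*k+1) k)
  have h2 : ((2*k+1 : ℕ) : ℝ) * (2*k).choose k = (2*k+1).choose (k+1) * (k+1) := by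
    exact_mod_cast congrArg (Nat.cast (R := ℝ)) (Nat.add_one_mul_choose_eq (2*k) k)
  have h3 : ((2*k+1).choose (k+1) : ℝ) = (2*k+1).choose k := by
    have := Nat.choose_symm (show k+1 ≤ 2*k+1 by omega)
    rw [show 2*k+1-(k+1) = k by omega] at this
    exact_mod_cast this.symm
  have hne : ((k : ℝ)+1) ≠ 0 := by positivity
  apply mul_left_cancel₀ hne
  push_cast at h1 h2 h3 ⊢
  linear_combination (-((k:ℝ)+1))*h1 - 2*((k:ℝ)+1)*h2 - 2*((k:ℝ)+1)^2*h3

theorem stmt12 {V : Type*} (k : ℕ) (hk : 1 ≤ k) (M : Finset (V × V)) (w : V × V → ℝ)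
    (hw : ∀ p ∈ M, 0 ≤ w p) (f : V → Fin (2 * k + 2))
    (hf : ∀ p ∈ M, f p.1 ≠ f p.2) :
    ∃ T : Finset (Fin (2 * k + 2)), T.card = k + 1 ∧
      ((k + 1 : ℝ) / (2 * k + 1)) * ∑ p ∈ M, w p ≤
        ∑ p ∈ M.filter (fun p => (f p.1 ∈ T ∧ f p.2 ∉ T) ∨ (f p.1 ∉ T ∧ f p.2 ∈ T)), w p := by
  classical
  set S := Finset.powersetCard (k+1) (Finset.univ : Finset (Fin (2*k+2))) with hS
  have hScard : S.card = (2*k+2).choose (k+1) := by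
    simp [hS, Finset.card_powersetCard]
  have hSne : S.Nonempty := by
    rw [hS, Finset.powersetCard_nonempty]
    simp
    omega
  have hcount : ∀ p ∈ M,
      (S.filter (fun T => (f p.1 ∈ T ∧ f p.2 ∉ T) ∨ (f p.1 ∉ T ∧ f p.2 ∈ T))).card
        = 2 * (2*k).choose k := by
    intro p hp
    have hab : f p.1 ≠ f p.2 := hf p hp
    rw [Finset.filter_or, Finset.card_union_of_disjoint]
    · have e1 : (S.filter (fun T => f p.1 ∈ T ∧ f p.2 ∉ T)).card = (2*k).choose k := by
        have := split_count (Finset.univ : Finset (Fin (2*k+2))) (f p.1) (f p.2)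
          (Finset.mem_univ _) (Finset.mem_univ _) hab k
        simpa [hS, Finset.card_univ] using this
      have e2 : (S.filter (fun T => f p.1 ∉ T ∧ f p.2 ∈ T)).card = (2*k).choose k := by
        have := split_count (Finset.univ : Finset (Fin (2*k+2))) (f p.2) (f p.1)
          (Finset.mem_univ _) (Finset.mem_univ _) hab.symm k
        rw [show Finset.filter (fun T => f p.1 ∉ T ∧ f p.2 ∈ T) S
            = Finset.filter (fun T => f p.2 ∈ T ∧ f p.1 ∉ T) S from
          Finset.filter_congr fun T _ => and_comm]
        simpa [hS, Finset.card_univ] using this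
      rw [e1, e2]; ring
    · rw [Finset.disjoint_filter]
      rintro T _ ⟨h1, h2⟩ ⟨h3, h4⟩
      exact h3 h1
  have key : ∑ T ∈ S, ∑ p ∈ M.filter
        (fun p => (f p.1 ∈ T ∧ f p.2 ∉ T) ∨ (f p.1 ∉ T ∧ f p.2 ∈ T)), w p
      = (2 * (2*k).choose k : ℝ) * ∑ p ∈ M, w p := by
    calc ∑ T ∈ S, ∑ p ∈ M.filter
          (fun p => (f p.1 ∈ T ∧ f p.2 ∉ T) ∨ (f p.1 ∉ T ∧ f p.2 ∈ T)), w p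
        = ∑ T ∈ S, ∑ p ∈ M,
            if (f p.1 ∈ T ∧ f p.2 ∉ T) ∨ (f p.1 ∉ T ∧ f p.2 ∈ T) then w p else 0 := by
          simp [Finset.sum_filter]
      _ = ∑ p ∈ M, ∑ T ∈ S,
            if (f p.1 ∈ T ∧ f p.2 ∉ T) ∨ (f p.1 ∉ T ∧ f p.2 ∈ T) then w p else 0 :=
          Finset.sum_comm
      _ = ∑ p ∈ M, (2 * (2*k).choose k : ℝ) * w p := by
          refine Finset.sum_congr rfl fun p hp => ?_
          rw [← Finset.sum_filter, Finset.sum_const, nsmul_eq_mul, hcount p hp]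
          push_cast; ring
      _ = (2 * (2*k).choose k : ℝ) * ∑ p ∈ M, w p := by rw [← Finset.mul_sum]
  have hW : 0 ≤ ∑ p ∈ M, w p := Finset.sum_nonneg hw
  have hmain : ∑ T ∈ S, (((k : ℝ) + 1) / (2 * k + 1)) * ∑ p ∈ M, w p
      ≤ ∑ T ∈ S, ∑ p ∈ M.filter
        (fun p => (f p.1 ∈ T ∧ f p.2 ∉ T) ∨ (f p.1 ∉ T ∧ f p.2 ∈ T)), w p := by
    rw [key, Finset.sum_const, nsmul_eq_mul, hScard]
    apply le_of_eq
    have hid := choose_id k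
    have h2k : (2*(k:ℝ)+1) ≠ 0 := by positivity
    field_simp
    linear_combination (∑ p ∈ M, w p) * hid
  obtain ⟨T, hTS, hle⟩ := Finset.exists_le_of_sum_le hSne hmain
  refine ⟨T, ?_, hle⟩
  rw [hS] at hTS
  exact (Finset.mem_powersetCard.mp hTS).2
end
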